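/- Let N ≥ 1 be an integer, d ≥ 2, and let φ be a continuous function on the unit sphere S^{d-1} ⊂ ℝ^d such that ∫_{S^{d-1}} (1 - u·ξ)^N φ(ξ) dξ = 0 for all u ∈ ℂ^d with ∑_{j=1}^d u_j² = 1. Then ∫_{S^{d-1}} p(ξ) φ(ξ) dξ = 0 for every polynomial p of degree ≤ N on ℝ^d. -/

import Mathlib

open MeasureTheory Finset

noncomputable section SphAux

variable {d : ℕ}

abbrev ESp (d : ℕ) := EuclideanSpace ℝ (Fin d)
abbrev Sph (d : ℕ) := Metric.sphere (0 : ESp d) 1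

noncomputable def sphM (d : ℕ) : Measure (Sph d) :=
  (volume : Measure (ESp d)).toSphere

instance : IsFiniteMeasure (sphM d) := by
  unfold sphM; infer_instance

def co (ξ : Sph d) (j : Fin d) : ℂ := (((ξ : ESp d) j : ℝ) : ℂ)

def dotc (u : Fin d → ℂ) (ξ : Sph d) : ℂ := ∑ j, u j * co ξ j

noncomputable def J (φ : Sph d → ℂ) (f : Sph d → ℂ) : ℂ := ∫ ξ, f ξ * φ ξ ∂(sphM d)

@[fun_prop]
lemma cont_co (j : Fin d) : Continuous fun ξ : Sph d => co ξ j :=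
  Complex.continuous_ofReal.comp ((EuclideanSpace.proj (𝕜 := ℝ) j).continuous.comp
    continuous_subtype_val)

@[fun_prop]
lemma cont_dotc (u : Fin d → ℂ) : Continuous fun ξ : Sph d => dotc u ξ := by
  unfold dotc
  exact continuous_finset_sum _ fun j _ => continuous_const.mul (cont_co j)

lemma Jint (φ : Sph d → ℂ) (hφ : Continuous φ) {f : Sph d → ℂ} (hf : Continuous f) :
    Integrable (fun ξ => f ξ * φ ξ) (sphM d) :=
  (hf.mul hφ).integrable_of_hasCompactSupport (HasCompactSupport.of_compactSpace _)

lemma J_congr {φ f g : Sph d → ℂ} (h : ∀ ξ, f ξ = g ξ) : J φ f = J φ g := by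
  have : f = g := funext h
  rw [this]

lemma J_sum (φ : Sph d → ℂ) (hφ : Continuous φ) {ι : Type*} (s : Finset ι)
    (F : ι → Sph d → ℂ) (hF : ∀ k ∈ s, Continuous (F k)) :
    J φ (fun ξ => ∑ k ∈ s, F k ξ) = ∑ k ∈ s, J φ (F k) := by
  unfold J
  rw [← integral_finset_sum s fun k hk => Jint φ hφ (hF k hk)]
  congr 1
  ext ξ
  rw [sum_mul]

lemma J_const_mul (φ : Sph d → ℂ) (c : ℂ) (f : Sph d → ℂ) :
    J φ (fun ξ => c * f ξ) = c * J φ f := by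
  unfold J
  simp_rw [mul_assoc]
  exact integral_const_mul c _

lemma J_add (φ : Sph d → ℂ) (hφ : Continuous φ) {f g : Sph d → ℂ}
    (hf : Continuous f) (hg : Continuous g) :
    J φ (fun ξ => f ξ + g ξ) = J φ f + J φ g := by
  unfold J
  rw [← integral_add (Jint φ hφ hf) (Jint φ hφ hg)]
  congr 1
  ext ξ
  rw [add_mul]

lemma J_sub (φ : Sph d → ℂ) (hφ : Continuous φ) {f g : Sph d → ℂ}
    (hf : Continuous f) (hg : Continuous g) :
    J φ (fun ξ => f ξ - g ξ) = J φ f - J φ g := by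
  unfold J
  rw [← integral_sub (Jint φ hφ hf) (Jint φ hφ hg)]
  congr 1
  ext ξ
  rw [sub_mul]

lemma sum_co_sq (ξ : Sph d) : ∑ j, co ξ j ^ 2 = 1 := by
  have h0 : ‖(ξ : ESp d)‖ = 1 := by
    have := ξ.2
    simpa [mem_sphere_zero_iff_norm] using this
  have h1 : ∑ j, ((ξ : ESp d) j) ^ 2 = 1 := by
    have h2 := EuclideanSpace.norm_eq (ξ : ESp d)
    rw [h0] at h2
    have h3 : ∑ j, ((ξ : ESp d) j) ^ 2 = ∑ j, ‖(ξ : ESp d) j‖ ^ 2 := by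
      congr 1; ext j; rw [Real.norm_eq_abs, sq_abs]
    rw [h3]
    have h4 : (0:ℝ) ≤ ∑ j, ‖(ξ : ESp d) j‖ ^ 2 :=
      Finset.sum_nonneg fun j _ => sq_nonneg _
    nlinarith [Real.sq_sqrt h4, h2.symm]
  unfold co
  rw [← Complex.ofReal_one, ← h1]
  push_cast
  ring

lemma poly_vanish {M : ℕ} (c : ℕ → ℂ)
    (h : ∀ z : ℝ, ∑ m ∈ range M, c m * (z : ℂ) ^ m = 0) :
    ∀ m ∈ range M, c m = 0 := by
  set P : Polynomial ℂ := ∑ m ∈ range M, Polynomial.C (c m) * Polynomial.X ^ m with hP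
  have hPz : P = 0 := by
    apply Polynomial.eq_zero_of_infinite_isRoot
    apply Set.infinite_of_injective_forall_mem (f := fun r : ℝ => (r : ℂ))
      (fun a b hab => by simpa using hab)
    intro z
    simp only [Set.mem_setOf_eq, Polynomial.IsRoot, hP, Polynomial.eval_finset_sum,
      Polynomial.eval_mul, Polynomial.eval_C, Polynomial.eval_pow, Polynomial.eval_X]
    exact h z
  intro m hm
  have hco := congrArg (fun q : Polynomial ℂ => q.coeff m) hPz
  simp only [hP, Polynomial.finset_sum_coeff, Polynomial.coeff_C_mul, Polynomial.coeff_X_pow,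
    Polynomial.coeff_zero, mul_ite, mul_one, mul_zero] at hco
  rwa [Finset.sum_ite_eq (range M) m c, if_pos hm] at hco

end SphAux

noncomputable section Extract

open Finset

variable {d : ℕ}

/-- Extraction of the `z²` coefficient from a trinomial family identity. -/
lemma coeff2 (φ : Sph d → ℂ) (hφ : Continuous φ) (A B C : Sph d → ℂ)
    (hA : Continuous A) (hB : Continuous B) (hC : Continuous C) (n : ℕ) (hn : 2 ≤ n)
    (h0 : ∀ z : ℝ, J φ (fun ξ => (A ξ + (z:ℂ) * B ξ + (z:ℂ)^2 * C ξ) ^ n) = 0) :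
    (n : ℂ) * J φ (fun ξ => A ξ ^ (n-1) * C ξ) +
      (n.choose 2 : ℂ) * J φ (fun ξ => A ξ ^ (n-2) * B ξ ^ 2) = 0 := by
  classical
  set D : ℕ → ℕ → (Sph d → ℂ) :=
    fun k j ξ => A ξ ^ (n-k) * B ξ ^ (k-j) * C ξ ^ j with hD
  have hDcont : ∀ k j, Continuous (D k j) := fun k j =>
    ((hA.pow _).mul (hB.pow _)).mul (hC.pow _)
  set e : ℕ → ℕ → ℂ := fun k j => (n.choose k : ℂ) * (k.choose j : ℂ) with he
  have expand : ∀ (z : ℂ) (ξ : Sph d),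
      (A ξ + z * B ξ + z^2 * C ξ) ^ n
        = ∑ k ∈ range (n+1), ∑ j ∈ range (k+1), (e k j * z^(k+j)) * D k j ξ := by
    intro z ξ
    have h1 : A ξ + z * B ξ + z^2 * C ξ = (z * B ξ + z^2 * C ξ) + A ξ := by ring
    rw [h1, add_pow]
    refine Finset.sum_congr rfl fun k hk => ?_
    have h2 : (z * B ξ + z^2 * C ξ) ^ k
        = (∑ j ∈ range (k+1), (z * C ξ)^j * B ξ^(k-j) * (k.choose j : ℂ)) * z^k := by
      rw [← add_pow]
      rw [← mul_pow]
      congr 1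
      ring
    rw [h2]
    simp only [Finset.sum_mul]
    refine Finset.sum_congr rfl fun j hj => ?_
    simp only [hD, he, mul_pow, pow_add]
    ring
  set c : ℕ → ℂ := fun m => ∑ k ∈ range (n+1), ∑ j ∈ range (k+1),
      if k + j = m then e k j * J φ (D k j) else 0 with hc
  have hzero : ∀ z : ℝ, ∑ m ∈ range (2*n+1), c m * (z:ℂ)^m = 0 := by
    intro z
    have e1 : ∑ m ∈ range (2*n+1), c m * (z:ℂ)^m
        = ∑ k ∈ range (n+1), ∑ j ∈ range (k+1), (e k j * (z:ℂ)^(k+j)) * J φ (D k j) := by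
      calc ∑ m ∈ range (2*n+1), c m * (z:ℂ)^m
          = ∑ m ∈ range (2*n+1), ∑ k ∈ range (n+1), ∑ j ∈ range (k+1),
              (if k + j = m then e k j * J φ (D k j) * (z:ℂ)^m else 0) := by
            simp only [hc, sum_mul, ite_mul, zero_mul]
        _ = ∑ k ∈ range (n+1), ∑ m ∈ range (2*n+1), ∑ j ∈ range (k+1),
              (if k + j = m then e k j * J φ (D k j) * (z:ℂ)^m else 0) := Finset.sum_comm
        _ = ∑ k ∈ range (n+1), ∑ j ∈ range (k+1), ∑ m ∈ range (2*n+1),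
              (if k + j = m then e k j * J φ (D k j) * (z:ℂ)^m else 0) :=
            Finset.sum_congr rfl fun k _ => Finset.sum_comm
        _ = ∑ k ∈ range (n+1), ∑ j ∈ range (k+1), (e k j * (z:ℂ)^(k+j)) * J φ (D k j) := by
            refine Finset.sum_congr rfl fun k hk => Finset.sum_congr rfl fun j hj => ?_
            rw [Finset.sum_ite_eq (range (2*n+1)) (k+j)
              (fun m => e k j * J φ (D k j) * (z:ℂ)^m), if_pos (mem_range.mpr (by
                have h1 := mem_range.mp hk
                have h2 := mem_range.mp hj
                omega))]
            ring
    have e3 : J φ (fun ξ => (A ξ + (z:ℂ) * B ξ + (z:ℂ)^2 * C ξ) ^ n)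
        = ∑ k ∈ range (n+1), ∑ j ∈ range (k+1), (e k j * (z:ℂ)^(k+j)) * J φ (D k j) := by
      rw [J_congr (fun ξ => expand (z:ℂ) ξ),
        J_sum φ hφ _ (F := fun k ξ => ∑ j ∈ range (k+1), (e k j * (z:ℂ)^(k+j)) * D k j ξ)
          (fun k _ => continuous_finset_sum _
          (fun j _ => continuous_const.mul (hDcont k j)))]
      refine Finset.sum_congr rfl fun k hk => ?_
      rw [J_sum φ hφ _ (F := fun j ξ => (e k j * (z:ℂ)^(k+j)) * D k j ξ)
        (fun j _ => continuous_const.mul (hDcont k j))]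
      exact Finset.sum_congr rfl fun j hj => J_const_mul φ _ _
    rw [e1, ← e3]
    exact h0 z
  have hc2 : c 2 = 0 := poly_vanish c hzero 2 (by rw [mem_range]; omega)
  have hcompute : c 2 = e 1 1 * J φ (D 1 1) + e 2 0 * J φ (D 2 0) := by
    simp only [hc]
    have hk : ∀ k ∈ range (n+1),
        (∑ j ∈ range (k+1), if k + j = 2 then e k j * J φ (D k j) else 0)
        = (if k = 1 then e 1 1 * J φ (D 1 1) else 0)
          + (if k = 2 then e 2 0 * J φ (D 2 0) else 0) := by
      intro k _
      rcases k with _ | k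
      · simp
      rcases k with _ | k
      · norm_num [Finset.sum_range_succ]
      rcases k with _ | k
      · norm_num [Finset.sum_range_succ]
      · rw [Finset.sum_eq_zero fun j _ => by rw [if_neg (by omega)],
          if_neg (by omega), if_neg (by omega), add_zero]
    rw [Finset.sum_congr rfl hk, Finset.sum_add_distrib,
      Finset.sum_ite_eq' (range (n+1)) 1 (fun _ => e 1 1 * J φ (D 1 1)),
      Finset.sum_ite_eq' (range (n+1)) 2 (fun _ => e 2 0 * J φ (D 2 0)),
      if_pos (by rw [mem_range]; omega), if_pos (by rw [mem_range]; omega)]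
  have h11 : J φ (D 1 1) = J φ (fun ξ => A ξ^(n-1) * C ξ) :=
    J_congr fun ξ => by simp [hD]
  have h20 : J φ (D 2 0) = J φ (fun ξ => A ξ^(n-2) * B ξ^2) :=
    J_congr fun ξ => by simp [hD]
  rw [hcompute, h11, h20] at hc2
  simpa [he] using hc2

end Extract

noncomputable section Geom

open Finset

variable {d : ℕ}

def Qu (u : Fin d → ℂ) : Prop := ∑ j, u j ^ 2 = 1

noncomputable def gI (φ : Sph d → ℂ) (n : ℕ) (u : Fin d → ℂ) : ℂ :=
  J φ (fun ξ => (1 - dotc u ξ) ^ n)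

lemma dotc_add (u v : Fin d → ℂ) (ξ : Sph d) : dotc (u + v) ξ = dotc u ξ + dotc v ξ := by
  unfold dotc
  rw [← Finset.sum_add_distrib]
  exact Finset.sum_congr rfl fun j _ => by simp [add_mul]

lemma dotc_smul (a : ℂ) (u : Fin d → ℂ) (ξ : Sph d) : dotc (a • u) ξ = a * dotc u ξ := by
  unfold dotc
  rw [Finset.mul_sum]
  exact Finset.sum_congr rfl fun j _ => by simp [mul_assoc]

lemma dotc_single (j : Fin d) (ξ : Sph d) : dotc (Pi.single j 1) ξ = co ξ j := by
  unfold dotc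
  simp [Pi.single_apply, ite_mul]

lemma dotc_neg (u : Fin d → ℂ) (ξ : Sph d) : dotc (-u) ξ = - dotc u ξ := by
  unfold dotc
  rw [← Finset.sum_neg_distrib]
  exact Finset.sum_congr rfl fun j _ => by simp

lemma J_zero (φ : Sph d → ℂ) : J φ (fun _ => 0) = 0 := by
  unfold J
  simp

/-- Isotropic line case: second moment against an isotropic tangent vector vanishes. -/
lemma line_case (φ : Sph d → ℂ) (hφ : Continuous φ) (m : ℕ)
    (hg : ∀ u, Qu u → gI φ (m+2) u = 0) {u v : Fin d → ℂ} (hu : Qu u)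
    (hv : ∑ j, v j ^ 2 = 0) (huv : ∑ j, u j * v j = 0) :
    J φ (fun ξ => (1 - dotc u ξ) ^ m * dotc v ξ ^ 2) = 0 := by
  have hcont1 : Continuous fun ξ : Sph d => 1 - dotc u ξ :=
    continuous_const.sub (cont_dotc u)
  have h0 : ∀ z : ℝ, J φ (fun ξ =>
      ((1 - dotc u ξ) + (z:ℂ) * (-dotc v ξ) + (z:ℂ)^2 * (0:ℂ)) ^ (m+2)) = 0 := by
    intro z
    have hQ : Qu (u + (z:ℂ) • v) := by
      unfold Qu
      have : ∀ j, (u j + (z:ℂ) * v j)^2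
          = u j^2 + (2*(z:ℂ)) * (u j * v j) + (z:ℂ)^2 * v j^2 := fun j => by ring
      calc ∑ j, ((u + (z:ℂ) • v) j)^2
          = ∑ j, (u j^2 + (2*(z:ℂ)) * (u j * v j) + (z:ℂ)^2 * v j^2) :=
            Finset.sum_congr rfl fun j _ => by
              simpa [Pi.smul_apply, smul_eq_mul] using this j
        _ = (∑ j, u j^2) + (2*(z:ℂ)) * (∑ j, u j * v j) + (z:ℂ)^2 * ∑ j, v j^2 := by
            rw [Finset.sum_add_distrib, Finset.sum_add_distrib, Finset.mul_sum, Finset.mul_sum]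
        _ = 1 := by rw [hu, huv, hv]; ring
    have h5 := hg _ hQ
    unfold gI at h5
    refine Eq.trans (J_congr fun ξ => ?_) h5
    rw [dotc_add, dotc_smul]
    ring
  have hres := coeff2 φ hφ _ (fun ξ => -dotc v ξ) _ hcont1 (cont_dotc v).neg continuous_const (m+2)
    (by omega) h0
  have hz1 : J φ (fun ξ => (1 - dotc u ξ) ^ (m+2-1) * (0:ℂ)) = 0 := by
    rw [J_congr (g := fun _ => 0) (fun ξ => by ring)]
    exact J_zero φ
  have hz2 : J φ (fun ξ => (1 - dotc u ξ) ^ (m+2-2) * (-dotc v ξ) ^ 2)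
      = J φ (fun ξ => (1 - dotc u ξ) ^ m * dotc v ξ ^ 2) := by
    apply J_congr
    intro ξ
    norm_num
  rw [hz1, hz2, mul_zero, zero_add] at hres
  have hch : ((m+2).choose 2 : ℂ) ≠ 0 := by
    have : 0 < (m+2).choose 2 := Nat.choose_pos (by omega)
    exact_mod_cast this.ne'
  exact (mul_eq_zero.mp hres).resolve_left hch

end Geom

noncomputable section Geom2

open Finset

variable {d : ℕ}

lemma gI_def (φ : Sph d → ℂ) (n : ℕ) (u : Fin d → ℂ) :
    gI φ n u = J φ (fun ξ => (1 - dotc u ξ) ^ n) := rfl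

lemma dotc_sub (u v : Fin d → ℂ) (ξ : Sph d) : dotc (u - v) ξ = dotc u ξ - dotc v ξ := by
  unfold dotc
  rw [← Finset.sum_sub_distrib]
  exact Finset.sum_congr rfl fun j _ => by simp [sub_mul]

/-- The conic (rational-curve) family relation. -/
lemma conic (φ : Sph d → ℂ) (hφ : Continuous φ) (m : ℕ)
    (hg : ∀ u, Qu u → gI φ (m+2) u = 0) {u w : Fin d → ℂ} (hu : Qu u)
    (hw : ∑ j, w j ^ 2 = 1) (huw : ∑ j, u j * w j = 0) :
    gI φ (m+1) u + ((m:ℂ)+1) * J φ (fun ξ => (1 - dotc u ξ) ^ m * dotc w ξ ^ 2) = 0 := by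
  have hA : Continuous fun ξ : Sph d => 1 - dotc u ξ := continuous_const.sub (cont_dotc u)
  have hB : Continuous fun ξ : Sph d => -(2 * dotc w ξ) :=
    (continuous_const.mul (cont_dotc w)).neg
  have hC : Continuous fun ξ : Sph d => 1 + dotc u ξ := continuous_const.add (cont_dotc u)
  have h0 : ∀ z : ℝ, J φ (fun ξ =>
      ((1 - dotc u ξ) + (z:ℂ) * (-(2 * dotc w ξ)) + (z:ℂ)^2 * (1 + dotc u ξ)) ^ (m+2)) = 0 := by
    intro z
    set cz : ℂ := 1 + (z:ℂ)^2 with hczdef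
    have hcz : cz ≠ 0 := by
      have : cz = ((1 + z^2 : ℝ) : ℂ) := by push_cast [hczdef]; ring
      rw [this]
      exact Complex.ofReal_ne_zero.mpr (by positivity)
    set u' : Fin d → ℂ := cz⁻¹ • ((1 - (z:ℂ)^2) • u + (2*(z:ℂ)) • w) with hu'def
    have hu'j : ∀ j, u' j = cz⁻¹ * ((1 - (z:ℂ)^2) * u j + (2*(z:ℂ)) * w j) := fun j => by
      simp [hu'def, Pi.smul_apply, Pi.add_apply, smul_eq_mul, mul_add]
    have hQ : Qu u' := by
      unfold Qu
      have e1 : ∀ j, u' j ^ 2 = (cz⁻¹)^2 * ((1-(z:ℂ)^2)^2 * u j^2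
          + (2*(1-(z:ℂ)^2)*(2*(z:ℂ))) * (u j * w j) + (2*(z:ℂ))^2 * w j^2) := fun j => by
        rw [hu'j j]; ring
      rw [Finset.sum_congr rfl fun j _ => e1 j, ← Finset.mul_sum]
      rw [Finset.sum_add_distrib, Finset.sum_add_distrib, ← Finset.mul_sum, ← Finset.mul_sum,
        ← Finset.mul_sum, hu, huw, hw]
      have : (1-(z:ℂ)^2)^2 * 1 + 2*(1-(z:ℂ)^2)*(2*(z:ℂ)) * 0 + (2*(z:ℂ))^2 * 1 = cz^2 := by
        rw [hczdef]; ring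
      rw [this]
      field_simp
    have hdot : ∀ ξ, dotc u' ξ = cz⁻¹ * ((1 - (z:ℂ)^2) * dotc u ξ + (2*(z:ℂ)) * dotc w ξ) := by
      intro ξ
      rw [hu'def, dotc_smul, dotc_add, dotc_smul, dotc_smul]
    have hpt : ∀ ξ, (1 - dotc u ξ) + (z:ℂ) * (-(2 * dotc w ξ)) + (z:ℂ)^2 * (1 + dotc u ξ)
        = cz * (1 - dotc u' ξ) := by
      intro ξ
      rw [hdot ξ, mul_sub, mul_one, ← mul_assoc, mul_inv_cancel₀ hcz, one_mul, hczdef]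
      ring
    calc J φ (fun ξ => ((1 - dotc u ξ) + (z:ℂ) * (-(2 * dotc w ξ))
            + (z:ℂ)^2 * (1 + dotc u ξ)) ^ (m+2))
        = J φ (fun ξ => cz^(m+2) * (1 - dotc u' ξ)^(m+2)) :=
          J_congr fun ξ => by rw [hpt ξ, mul_pow]
      _ = cz^(m+2) * gI φ (m+2) u' := J_const_mul φ _ _
      _ = 0 := by rw [hg u' hQ, mul_zero]
  have hres := coeff2 φ hφ _ _ _ hA hB hC (m+2) (by omega) h0
  have hE1 : m + 2 - 1 = m + 1 := rfl
  have hE2 : m + 2 - 2 = m := rfl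
  rw [hE1, hE2] at hres
  have hJ1 : J φ (fun ξ => (1 - dotc u ξ) ^ (m+1) * (1 + dotc u ξ))
      = 2 * gI φ (m+1) u := by
    rw [J_congr (g := fun ξ => 2 * (1 - dotc u ξ)^(m+1) - (1 - dotc u ξ)^(m+2))
      (fun ξ => by ring)]
    rw [J_sub φ hφ (f := fun ξ => 2 * (1 - dotc u ξ)^(m+1)) (g := fun ξ => (1 - dotc u ξ)^(m+2)) (continuous_const.mul (hA.pow _)) (hA.pow _), J_const_mul]
    rw [← gI_def, ← gI_def, hg u hu, sub_zero]
  have hJ2 : J φ (fun ξ => (1 - dotc u ξ) ^ m * (-(2 * dotc w ξ)) ^ 2)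
      = 4 * J φ (fun ξ => (1 - dotc u ξ) ^ m * dotc w ξ ^ 2) := by
    rw [← J_const_mul]
    exact J_congr fun ξ => by ring
  rw [hJ1, hJ2] at hres
  push_cast at hres
  have hch : (((m+2).choose 2 : ℕ) : ℂ) * 2 = ((m:ℂ)+2) * ((m:ℂ)+1) := by
    have h2 : (m+2).choose 2 * 2 = (m+2) * (m+1) := by
      rw [Nat.choose_two_right]
      have he : m + 2 - 1 = m + 1 := by omega
      rw [he, Nat.div_mul_cancel]
      rcases Nat.even_or_odd m with ⟨k, hk⟩ | ⟨k, hk⟩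
      · exact ⟨(k+1)*(2*k+1), by subst hk; ring⟩
      · exact ⟨(2*k+3)*(k+1), by subst hk; ring⟩
    exact_mod_cast congrArg (fun x : ℕ => (x : ℂ)) h2
  have hkey : (2*((m:ℂ)+2)) * (gI φ (m+1) u
      + ((m:ℂ)+1) * J φ (fun ξ => (1 - dotc u ξ) ^ m * dotc w ξ ^ 2)) = 0 := by
    linear_combination hres
      - 2 * (J φ (fun ξ => (1 - dotc u ξ) ^ m * dotc w ξ ^ 2)) * hch
  have hne : (2*((m:ℂ)+2)) ≠ 0 := by
    have : ((m:ℂ)+2) ≠ 0 := by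
      have : ((m:ℂ)+2) = ((m+2 : ℕ) : ℂ) := by push_cast; ring
      rw [this]
      exact Nat.cast_ne_zero.mpr (by omega)
    exact mul_ne_zero two_ne_zero this
  exact (mul_eq_zero.mp hkey).resolve_left hne

end Geom2

noncomputable section Geom3

open Finset

variable {d : ℕ}

/-- Value of the quadratic form on arbitrary tangent vectors. -/
lemma Bval (φ : Sph d → ℂ) (hφ : Continuous φ) (m : ℕ)
    (hg : ∀ u, Qu u → gI φ (m+2) u = 0) {u w : Fin d → ℂ} (hu : Qu u)
    (huw : ∑ j, u j * w j = 0) :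
    ((m:ℂ)+1) * J φ (fun ξ => (1 - dotc u ξ) ^ m * dotc w ξ ^ 2)
      = -(∑ j, w j ^ 2) * gI φ (m+1) u := by
  by_cases hw : ∑ j, w j ^ 2 = 0
  · rw [line_case φ hφ m hg hu hw huw, hw, mul_zero, neg_zero, zero_mul]
  · obtain ⟨μ, hμ⟩ := IsAlgClosed.exists_pow_nat_eq (k := ℂ) (∑ j, w j ^ 2) (by norm_num : 0 < 2)
    have hμ0 : μ ≠ 0 := by
      intro h
      apply hw
      rw [← hμ, h]
      ring
    set w' : Fin d → ℂ := μ⁻¹ • w with hw'def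
    have hw'1 : ∑ j, w' j ^ 2 = 1 := by
      have : ∀ j, w' j ^ 2 = (μ⁻¹)^2 * w j ^ 2 := fun j => by
        simp [hw'def, Pi.smul_apply, smul_eq_mul]
        ring
      rw [Finset.sum_congr rfl fun j _ => this j, ← Finset.mul_sum, ← hμ]
      field_simp
    have huw' : ∑ j, u j * w' j = 0 := by
      have : ∀ j, u j * w' j = μ⁻¹ * (u j * w j) := fun j => by
        simp [hw'def, Pi.smul_apply, smul_eq_mul]
        ring
      rw [Finset.sum_congr rfl fun j _ => this j, ← Finset.mul_sum, huw, mul_zero]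
    have hres := conic φ hφ m hg hu hw'1 huw'
    have hscale : J φ (fun ξ => (1 - dotc u ξ) ^ m * dotc w' ξ ^ 2)
        = (μ⁻¹)^2 * J φ (fun ξ => (1 - dotc u ξ) ^ m * dotc w ξ ^ 2) := by
      rw [← J_const_mul]
      apply J_congr
      intro ξ
      rw [hw'def, dotc_smul]
      ring
    rw [hscale] at hres
    have h2 : μ^2 * (gI φ (m+1) u
        + ((m:ℂ)+1) * ((μ⁻¹)^2 * J φ (fun ξ => (1 - dotc u ξ) ^ m * dotc w ξ ^ 2))) = 0 := by
      rw [hres, mul_zero]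
    have h3 : μ^2 * (μ⁻¹)^2 = 1 := by field_simp
    linear_combination h2 - gI φ (m+1) u * hμ
      - ((m:ℂ)+1) * (J φ (fun ξ => (1 - dotc u ξ) ^ m * dotc w ξ ^ 2)) * h3

/-- Descent step. -/
lemma descent (φ : Sph d → ℂ) (hφ : Continuous φ) (m : ℕ) (hd1 : 1 ≤ d)
    (hg : ∀ u, Qu u → gI φ (m+2) u = 0) :
    ∀ u, Qu u → gI φ (m+1) u = 0 := by
  intro u hu
  have huQ : ∑ j, u j ^ 2 = 1 := hu
  set E : Fin d → (Fin d → ℂ) := fun j => Pi.single j 1 with hE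
  have hEi : ∀ j i, E j i = if i = j then (1:ℂ) else 0 := fun j i => by
    rw [hE]
    simp [Pi.single_apply]
  set W : Fin d → (Fin d → ℂ) := fun j => E j - u j • u with hW
  have hWi : ∀ j i, W j i = E j i - u j * u i := fun j i => by
    simp [hW, Pi.smul_apply, smul_eq_mul]
  have hsingle : ∀ (f : Fin d → ℂ) (j : Fin d), ∑ i, f i * E j i = f j := by
    intro f j
    simp [hEi, mul_ite]
  have huW : ∀ j, ∑ i, u i * W j i = 0 := by
    intro j
    have e0 : ∀ i, u i * W j i = u i * E j i - u j * u i ^ 2 := fun i => by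
      rw [hWi j i]; ring
    rw [Finset.sum_congr rfl fun i _ => e0 i, Finset.sum_sub_distrib, hsingle u j,
      ← Finset.mul_sum, huQ, mul_one, sub_self]
  have hWW : ∀ j, ∑ i, W j i ^ 2 = 1 - u j ^ 2 := by
    intro j
    have e0 : ∀ i, W j i ^ 2 = E j i ^ 2
        - (2 * u j) * (u i * E j i) + u j ^ 2 * u i ^ 2 := fun i => by
      rw [hWi j i]; ring
    rw [Finset.sum_congr rfl fun i _ => e0 i, Finset.sum_add_distrib, Finset.sum_sub_distrib,
      ← Finset.mul_sum, ← Finset.mul_sum, hsingle u j, huQ]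
    have e1 : ∑ i, E j i ^ 2 = 1 := by
      have : ∀ i, E j i ^ 2 = E j i * E j i := fun i => sq _
      rw [Finset.sum_congr rfl fun i _ => this i, hsingle (E j) j, hEi]
      simp
    rw [e1]
    ring
  have hptW : ∀ (ξ : Sph d) (j : Fin d), dotc (W j) ξ = co ξ j - u j * dotc u ξ := by
    intro ξ j
    rw [hW, hE]
    rw [dotc_sub, dotc_single, dotc_smul]
  have hkey : ∀ ξ : Sph d, ∑ j, dotc (W j) ξ ^ 2 = 1 - dotc u ξ ^ 2 := by
    intro ξ
    have e0 : ∀ j, dotc (W j) ξ ^ 2 = co ξ j ^ 2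
        - (2 * dotc u ξ) * (u j * co ξ j) + dotc u ξ ^ 2 * u j ^ 2 := fun j => by
      rw [hptW ξ j]; ring
    rw [Finset.sum_congr rfl fun j _ => e0 j, Finset.sum_add_distrib, Finset.sum_sub_distrib,
      ← Finset.mul_sum, ← Finset.mul_sum, sum_co_sq ξ, huQ]
    have e1 : ∑ j, u j * co ξ j = dotc u ξ := rfl
    rw [e1]
    ring
  have hsum : ∑ j, (((m:ℂ)+1) * J φ (fun ξ => (1 - dotc u ξ) ^ m * dotc (W j) ξ ^ 2))
      = ∑ j, (-(∑ i, W j i ^ 2) * gI φ (m+1) u) :=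
    Finset.sum_congr rfl fun j _ => Bval φ hφ m hg hu (huW j)
  have t1 : ∑ j, J φ (fun ξ => (1 - dotc u ξ) ^ m * dotc (W j) ξ ^ 2)
      = 2 * gI φ (m+1) u := by
    rw [← J_sum φ hφ univ (F := fun j ξ => (1 - dotc u ξ) ^ m * dotc (W j) ξ ^ 2) (fun j _ =>
      ((continuous_const.sub (cont_dotc u)).pow m).mul ((cont_dotc (W j)).pow 2))]
    have p1 : ∀ ξ : Sph d, ∑ j, (1 - dotc u ξ) ^ m * dotc (W j) ξ ^ 2
        = 2 * (1 - dotc u ξ) ^ (m+1) - (1 - dotc u ξ) ^ (m+2) := by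
      intro ξ
      rw [← Finset.mul_sum, hkey ξ]
      ring
    rw [J_congr p1, J_sub φ hφ (f := fun ξ => 2 * (1 - dotc u ξ)^(m+1)) (g := fun ξ => (1 - dotc u ξ)^(m+2))
      (continuous_const.mul ((continuous_const.sub (cont_dotc u)).pow (m+1)))
      ((continuous_const.sub (cont_dotc u)).pow (m+2)), J_const_mul,
      ← gI_def, ← gI_def, hg u hu, sub_zero]
  have t2 : ∑ j, (-(∑ i, W j i ^ 2) * gI φ (m+1) u)
      = -((d:ℂ) - 1) * gI φ (m+1) u := by
    rw [Finset.sum_congr rfl (fun j _ => by rw [hWW j]), ← Finset.sum_mul]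
    congr 1
    rw [Finset.sum_neg_distrib, Finset.sum_sub_distrib, huQ]
    simp [Finset.card_univ]
  rw [← Finset.mul_sum, t1, t2] at hsum
  have hco : (2*((m:ℂ)+1) + ((d:ℂ)-1)) ≠ 0 := by
    have : (2*((m:ℂ)+1) + ((d:ℂ)-1)) = ((2*m + 1 + d : ℕ) : ℂ) := by push_cast; ring
    rw [this]
    exact Nat.cast_ne_zero.mpr (by omega)
  have hfin : (2*((m:ℂ)+1) + ((d:ℂ)-1)) * gI φ (m+1) u = 0 := by
    linear_combination hsum
  exact (mul_eq_zero.mp hfin).resolve_left hco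

lemma step1 (φ : Sph d → ℂ) (hφ : Continuous φ) (hd1 : 1 ≤ d)
    (hg : ∀ u, Qu u → gI φ 1 u = 0) : ∀ u, Qu u → gI φ 0 u = 0 := by
  have j0 : Fin d := ⟨0, hd1⟩
  set e0 : Fin d → ℂ := Pi.single j0 1 with he0
  have hQ : Qu e0 := by
    unfold Qu
    simp [he0, Pi.single_apply, sq, ite_and, Finset.sum_ite_eq']
  have hQ' : Qu (-e0) := by
    unfold Qu
    have : ∀ j, (-e0) j ^ 2 = e0 j ^ 2 := fun j => by simp [neg_sq]
    rw [Finset.sum_congr rfl fun j _ => this j]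
    exact hQ
  have g1e : gI φ 1 e0 = J φ (fun _ => 1) - J φ (fun ξ => co ξ j0) := by
    rw [gI_def, J_congr (g := fun ξ => 1 - co ξ j0)
      (fun ξ => by rw [pow_one, he0, dotc_single]),
      J_sub φ hφ continuous_const (cont_co j0)]
  have g1e' : gI φ 1 (-e0) = J φ (fun _ => 1) + J φ (fun ξ => co ξ j0) := by
    rw [gI_def, J_congr (g := fun ξ => 1 + co ξ j0)
      (fun ξ => by rw [pow_one, dotc_neg, he0, dotc_single]; ring),
      J_add φ hφ continuous_const (cont_co j0)]
  have h1 := hg e0 hQ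
  have h2 := hg (-e0) hQ'
  rw [g1e] at h1
  rw [g1e'] at h2
  have hJ1 : J φ (fun _ => 1) = 0 := by linear_combination (h1 + h2) / 2
  intro u _
  rw [gI_def, J_congr (g := fun _ => (1:ℂ)) (fun ξ => pow_zero _), hJ1]

lemma allg (φ : Sph d → ℂ) (hφ : Continuous φ) (hd1 : 1 ≤ d) {N : ℕ}
    (hg : ∀ u, Qu u → gI φ N u = 0) : ∀ n ≤ N, ∀ u, Qu u → gI φ n u = 0 := by
  have step : ∀ n, (∀ u, Qu u → gI φ (n+1) u = 0) → ∀ u, Qu u → gI φ n u = 0 := by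
    intro n
    match n with
    | 0 => exact step1 φ hφ hd1
    | (m+1) => exact fun h => descent φ hφ m hd1 h
  have key : ∀ k n, n + k = N → ∀ u, Qu u → gI φ n u = 0 := by
    intro k
    induction k with
    | zero => intro n hn; rw [Nat.add_zero] at hn; subst hn; exact hg
    | succ k IH =>
        intro n hn u hu
        exact step n (IH (n+1) (by omega)) u hu
  intro n hn
  exact key (N - n) n (by omega)

end Geom3

noncomputable section Moments

open Finset

variable {d : ℕ}

noncomputable def mom (φ : Sph d → ℂ) (α : Fin d → ℕ) : ℂ :=
  J φ (fun ξ => ∏ j, co ξ j ^ α j)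

lemma cont_prod_co (α : Fin d → ℕ) : Continuous fun ξ : Sph d => ∏ j, co ξ j ^ α j :=
  continuous_finset_prod _ fun j _ => (cont_co j).pow _

/-- Multinomial expansion of the moment functional. -/
lemma Ak_exp (φ : Sph d → ℂ) (hφ : Continuous φ) (k : ℕ) (u : Fin d → ℂ) :
    J φ (fun ξ => dotc u ξ ^ k)
      = ∑ α ∈ piAntidiag univ k,
          ((Nat.multinomial univ α : ℂ) * ∏ i, u i ^ α i) * mom φ α := by
  have hpt : ∀ ξ : Sph d, dotc u ξ ^ k
      = ∑ α ∈ piAntidiag univ k,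
          ((Nat.multinomial univ α : ℂ) * ∏ i, u i ^ α i) * ∏ i, co ξ i ^ α i := by
    intro ξ
    unfold dotc
    rw [Finset.sum_pow_eq_sum_piAntidiag univ (fun i => u i * co ξ i) k]
    refine Finset.sum_congr rfl fun α hα => ?_
    rw [mul_assoc, ← Finset.prod_mul_distrib]
    congr 1
    exact Finset.prod_congr rfl fun i _ => (mul_pow _ _ _)
  rw [J_congr hpt, J_sum φ hφ _
    (F := fun α ξ => ((Nat.multinomial univ α : ℂ) * ∏ i, u i ^ α i) * ∏ i, co ξ i ^ α i)
    (fun α _ => continuous_const.mul (cont_prod_co α))]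
  exact Finset.sum_congr rfl fun α _ => J_const_mul φ _ _

/-- Binomial expansion of `gI`. -/
lemma gI_exp (φ : Sph d → ℂ) (hφ : Continuous φ) (n : ℕ) (u : Fin d → ℂ) :
    gI φ n u = ∑ k ∈ range (n+1),
      ((-1:ℂ))^k * (n.choose k : ℂ) * J φ (fun ξ => dotc u ξ ^ k) := by
  have hpt : ∀ ξ : Sph d, (1 - dotc u ξ) ^ n
      = ∑ k ∈ range (n+1), ((-1:ℂ))^k * (n.choose k : ℂ) * dotc u ξ ^ k := by
    intro ξ
    have h1 : (1 : ℂ) - dotc u ξ = -(dotc u ξ) + 1 := by ring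
    rw [h1, add_pow]
    refine Finset.sum_congr rfl fun k hk => ?_
    rw [neg_pow]
    ring
  rw [gI_def, J_congr hpt, J_sum φ hφ _
    (F := fun k ξ => ((-1:ℂ))^k * (n.choose k : ℂ) * dotc u ξ ^ k)
    (fun k _ => continuous_const.mul ((cont_dotc u).pow k))]
  exact Finset.sum_congr rfl fun k _ => J_const_mul φ _ _

lemma moments_zero (φ : Sph d → ℂ) (hφ : Continuous φ) (hd : 2 ≤ d) {N : ℕ}
    (hgall : ∀ n ≤ N, ∀ u, Qu u → gI φ n u = 0) :
    ∀ n ≤ N, ∀ α : Fin d → ℕ, (∑ i, α i) = n → mom φ α = 0 := by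
  intro n
  induction n using Nat.strong_induction_on with
  | _ n IH =>
    intro hnN α hα
    -- all lower moment functionals vanish identically
    have hlow : ∀ k < n, ∀ v : Fin d → ℂ, J φ (fun ξ => dotc v ξ ^ k) = 0 := by
      intro k hk v
      rw [Ak_exp φ hφ k v]
      refine Finset.sum_eq_zero fun β hβ => ?_
      have hs : ∑ i, β i = k := (Finset.mem_piAntidiag.mp hβ).1
      rw [IH k hk (by omega) β hs, mul_zero]
    -- the degree-n functional vanishes on the quadric
    have hq : ∀ u, Qu u → J φ (fun ξ => dotc u ξ ^ n) = 0 := by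
      intro u hu
      have h1 := hgall n hnN u hu
      rw [gI_exp φ hφ n u, Finset.sum_range_succ] at h1
      have h2 : ∑ k ∈ range n,
          ((-1:ℂ))^k * (n.choose k : ℂ) * J φ (fun ξ => dotc u ξ ^ k) = 0 :=
        Finset.sum_eq_zero fun k hk => by
          rw [hlow k (Finset.mem_range.mp hk) u, mul_zero]
      rw [h2, zero_add, Nat.choose_self, Nat.cast_one, mul_one] at h1
      have hne : ((-1:ℂ))^n ≠ 0 := pow_ne_zero _ (by norm_num)
      exact (mul_eq_zero.mp h1).resolve_left hne
    -- extend to all vectors with nonzero bilinear square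
    have hall : ∀ v : Fin d → ℂ, (∑ j, v j ^ 2) ≠ 0 →
        J φ (fun ξ => dotc v ξ ^ n) = 0 := by
      intro v hv
      obtain ⟨μ, hμ⟩ := IsAlgClosed.exists_pow_nat_eq (k := ℂ) (∑ j, v j ^ 2)
        (by norm_num : 0 < 2)
      have hμ0 : μ ≠ 0 := by
        intro h
        apply hv
        rw [← hμ, h]
        ring
      set u : Fin d → ℂ := μ⁻¹ • v with hudef
      have hQ : Qu u := by
        unfold Qu
        have : ∀ j, u j ^ 2 = (μ⁻¹)^2 * v j ^ 2 := fun j => by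
          simp [hudef, Pi.smul_apply, smul_eq_mul]
          ring
        rw [Finset.sum_congr rfl fun j _ => this j, ← Finset.mul_sum, ← hμ]
        field_simp
      have hscale : J φ (fun ξ => dotc v ξ ^ n) = μ^n * J φ (fun ξ => dotc u ξ ^ n) := by
        rw [← J_const_mul]
        apply J_congr
        intro ξ
        have : dotc v ξ = μ * dotc u ξ := by
          rw [hudef, dotc_smul, ← mul_assoc, mul_inv_cancel₀ hμ0, one_mul]
        rw [this, mul_pow]
      rw [hscale, hq u hQ, mul_zero]
    -- package into a multivariate polynomial and extract coefficients
    classical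
    set c : (Fin d → ℕ) → ℂ := fun β => (Nat.multinomial univ β : ℂ) * mom φ β with hc
    set P : MvPolynomial (Fin d) ℂ := ∑ β ∈ piAntidiag univ n,
      MvPolynomial.monomial (Finsupp.equivFunOnFinite.symm β) (c β) with hP
    have hevalP : ∀ v : Fin d → ℂ, MvPolynomial.eval v P = J φ (fun ξ => dotc v ξ ^ n) := by
      intro v
      rw [Ak_exp φ hφ n v, hP, map_sum]
      refine Finset.sum_congr rfl fun β hβ => ?_
      rw [MvPolynomial.eval_monomial]
      rw [Finsupp.prod_fintype _ _ (fun i => pow_zero _)]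
      have : ∀ i, (Finsupp.equivFunOnFinite.symm β) i = β i := fun i => rfl
      rw [Finset.prod_congr rfl fun i _ => by rw [this i]]
      rw [hc]
      ring
    set S : MvPolynomial (Fin d) ℂ := ∑ i, (MvPolynomial.X i)^2 with hS
    have hPS : P * S = 0 := by
      apply MvPolynomial.funext
      intro v
      rw [map_mul, map_zero, hevalP]
      have hSeval : MvPolynomial.eval v S = ∑ j, v j ^ 2 := by
        rw [hS, map_sum]
        exact Finset.sum_congr rfl fun i _ => by
          rw [map_pow, MvPolynomial.eval_X]
      rw [hSeval]
      by_cases hv : ∑ j, v j ^ 2 = 0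
      · rw [hv, mul_zero]
      · rw [hall v hv, zero_mul]
    have hSne : S ≠ 0 := by
      intro hS0
      have j0 : Fin d := ⟨0, by omega⟩
      have hco := congrArg (MvPolynomial.coeff (Finsupp.single j0 2)) hS0
      rw [hS, MvPolynomial.coeff_sum] at hco
      have : ∀ i : Fin d, (MvPolynomial.X (R := ℂ) i ^ 2).coeff (Finsupp.single j0 2)
          = if i = j0 then 1 else 0 := by
        intro i
        rw [MvPolynomial.X_pow_eq_monomial, MvPolynomial.coeff_monomial]
        by_cases h : i = j0
        · rw [if_pos (by rw [h]), if_pos h]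
        · rw [if_neg (fun hc => h (Finsupp.single_left_injective
            (by norm_num : (2:ℕ) ≠ 0) hc)), if_neg h]
      rw [Finset.sum_congr rfl fun i _ => this i, Finset.sum_ite_eq' univ j0,
        if_pos (mem_univ j0)] at hco
      simp at hco
    have hP0 : P = 0 := by
      rcases mul_eq_zero.mp hPS with h | h
      · exact h
      · exact absurd h hSne
    -- extract the coefficient at α
    have hαmem : α ∈ piAntidiag univ n :=
      Finset.mem_piAntidiag.mpr ⟨hα, fun i _ => mem_univ i⟩
    have hcoeff := congrArg (MvPolynomial.coeff (Finsupp.equivFunOnFinite.symm α)) hP0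
    rw [hP, MvPolynomial.coeff_sum] at hcoeff
    simp only [MvPolynomial.coeff_monomial, MvPolynomial.coeff_zero] at hcoeff
    rw [Finset.sum_eq_single_of_mem α hαmem
      (fun β _ hβα => by
        rw [if_neg]
        intro hcontr
        exact hβα (Finsupp.equivFunOnFinite.symm.injective hcontr)),
      if_pos rfl] at hcoeff
    have hmult : ((Nat.multinomial univ α : ℕ) : ℂ) ≠ 0 :=
      Nat.cast_ne_zero.mpr (Nat.multinomial_pos _ _).ne'
    rw [hc] at hcoeff
    exact (mul_eq_zero.mp hcoeff).resolve_left hmult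

end Moments

open Finset in
/-- If `N ≥ 1` and a continuous function `φ` on the unit sphere `S^{d-1} ⊂ ℝ^d` satisfies
`∫ (1 - u·ξ)^N φ(ξ) dξ = 0` for all `u ∈ ℂ^d` with `∑ u_j² = 1`, then `φ` is orthogonal to
every polynomial of degree `≤ N` on `ℝ^d`. -/
theorem stmt_6 (d N : ℕ) (hd : 2 ≤ d) (hN : 1 ≤ N)
    (φ : Metric.sphere (0 : EuclideanSpace ℝ (Fin d)) 1 → ℂ) (hφ : Continuous φ)
    (h : ∀ u : Fin d → ℂ, (∑ j, u j ^ 2) = 1 →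
      (∫ ξ : Metric.sphere (0 : EuclideanSpace ℝ (Fin d)) 1,
        (1 - ∑ j, u j * (((ξ : EuclideanSpace ℝ (Fin d)) j : ℝ) : ℂ)) ^ N * φ ξ
        ∂(Measure.toSphere (volume : Measure (EuclideanSpace ℝ (Fin d))))) = 0) :
    ∀ p : MvPolynomial (Fin d) ℝ, p.totalDegree ≤ N →
      (∫ ξ : Metric.sphere (0 : EuclideanSpace ℝ (Fin d)) 1,
        ((MvPolynomial.eval (fun i => (ξ : EuclideanSpace ℝ (Fin d)) i) p : ℝ) : ℂ) * φ ξ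
        ∂(Measure.toSphere (volume : Measure (EuclideanSpace ℝ (Fin d))))) = 0 := by
  intro p hp
  have hd1 : 1 ≤ d := by omega
  have hgN : ∀ u, Qu u → gI φ N u = 0 := fun u hu => h u hu
  have hgall := allg φ hφ hd1 hgN
  have hmom := moments_zero φ hφ hd hgall
  have hpt : ∀ ξ : Sph d, ((MvPolynomial.eval (fun i => (ξ : ESp d) i) p : ℝ) : ℂ)
      = ∑ m ∈ p.support, ((MvPolynomial.coeff m p : ℝ) : ℂ) * ∏ i, co ξ i ^ m i := by
    intro ξ
    rw [MvPolynomial.eval_eq]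
    push_cast
    refine Finset.sum_congr rfl fun m hm => ?_
    congr 1
    have he : (∏ i ∈ m.support, co ξ i ^ m i) = ∏ i, co ξ i ^ m i :=
      Finset.prod_subset (Finset.subset_univ m.support)
        (fun i _ hi => by rw [Finsupp.notMem_support_iff.mp hi, pow_zero])
    rw [← he]
    rfl
  have hmain : J φ (fun ξ => ((MvPolynomial.eval (fun i => (ξ : ESp d) i) p : ℝ) : ℂ)) = 0 := by
    rw [J_congr hpt, J_sum φ hφ _
      (F := fun m ξ => ((MvPolynomial.coeff m p : ℝ) : ℂ) * ∏ i, co ξ i ^ m i)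
      (fun m _ => continuous_const.mul (cont_prod_co (fun i => m i)))]
    refine Finset.sum_eq_zero fun m hm => ?_
    rw [J_const_mul]
    have hdeg : (∑ i, m i) ≤ N := by
      have h1 : m.sum (fun _ e => e) = ∑ i, m i :=
        Finsupp.sum_fintype m (fun _ e => e) (fun i => rfl)
      rw [← h1]
      exact le_trans (MvPolynomial.le_totalDegree hm) hp
    have : mom φ (fun i => m i) = 0 := hmom _ hdeg _ rfl
    rw [show J φ (fun ξ => ∏ i, co ξ i ^ m i) = mom φ (fun i => m i) from rfl, this, mul_zero]
  exact hmain
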